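/- Let 0 < ρ < 1 and let A = ρ·J be n×n where J is the upper bidiagonal matrix with 1's on the diagonal and superdiagonal (the Jordan block with eigenvalue 1), and let H = ρ·e_n be the n-th canonical basis vector scaled by ρ. Then the distance to uncontrollability d(A,H) = inf_{s ∈ ℂ} σ_min([A − sI, H]) equals ρ·sin(π/(n+1)). -/

import Mathlib

open Matrix Real

/-- Least singular value of a matrix `B` with `n` rows:
`σ_min(B) = inf { ‖Bᴴ v‖ : ‖v‖ = 1 }`. -/
noncomputable def sigmaMin {n : ℕ} {m : Type*} [Fintype m] (B : Matrix (Fin n) m ℂ) : ℝ :=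
  sInf {x : ℝ | ∃ v : EuclideanSpace ℂ (Fin n), ‖v‖ = 1 ∧ x = ‖Matrix.toEuclideanLin Bᴴ v‖}

/-- Eising's distance to uncontrollability:
`d(A,H) = inf_{s ∈ ℂ} σ_min [A - sI, H]`. -/
noncomputable def distUnc {n r : ℕ} (A : Matrix (Fin n) (Fin n) ℂ)
    (H : Matrix (Fin n) (Fin r) ℂ) : ℝ :=
  ⨅ s : ℂ, sigmaMin (Matrix.fromCols (A - s • (1 : Matrix (Fin n) (Fin n) ℂ)) H)

/-- The matrix `ρ·J_n(1)`: `ρ` on the diagonal and superdiagonal, zeros elsewhere. -/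
def rhoJordan (n : ℕ) (ρ : ℝ) : Matrix (Fin n) (Fin n) ℂ :=
  Matrix.of fun i j =>
    if (i : ℕ) = (j : ℕ) ∨ (j : ℕ) = (i : ℕ) + 1 then (ρ : ℂ) else 0


open Finset


-- recurrence
lemma sin_rec (θ : ℝ) (j : ℕ) :
    sin (((j:ℝ)+2)*θ) + sin ((j:ℝ)*θ) = 2 * cos θ * sin (((j:ℝ)+1)*θ) := by
  have h1 : ((j:ℝ)+2)*θ = ((j:ℝ)+1)*θ + θ := by ring
  have h2 : (j:ℝ)*θ = ((j:ℝ)+1)*θ - θ := by ring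
  rw [h1, h2, Real.sin_add, Real.sin_sub]; ring

-- telescoping identity:  cos(2(k+1)θ)*(2 sin θ) = sin((2k+3)θ) - sin((2k+1)θ)
lemma cos_tel (θ : ℝ) (k : ℕ) :
    cos ((2*(k:ℝ)+2)*θ) * (2 * sin θ) = sin ((2*(k:ℝ)+3)*θ) - sin ((2*(k:ℝ)+1)*θ) := by
  have h1 : (2*(k:ℝ)+3)*θ = (2*(k:ℝ)+2)*θ + θ := by ring
  have h2 : (2*(k:ℝ)+1)*θ = (2*(k:ℝ)+2)*θ - θ := by ring
  rw [h1, h2, Real.sin_add, Real.sin_sub]; ring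

-- discrete Wirtinger: path adjacency spectral bound
lemma wirtinger {n : ℕ} (hn : 1 ≤ n) (x : ℕ → ℝ) (hx : ∀ j, 0 ≤ x j) :
    ∑ j ∈ range (n-1), 2 * x j * x (j+1)
      ≤ 2 * cos (π/((n:ℝ)+1)) * ∑ k ∈ range n, x k ^ 2 := by
  set θ := π/((n:ℝ)+1) with hθ
  have hn1 : (0:ℝ) < (n:ℝ)+1 := by positivity
  have hθpos : 0 < θ := by positivity
  -- s j = sin (j θ)
  set s : ℕ → ℝ := fun j => sin ((j:ℝ)*θ) with hs
  have hspos : ∀ j, 1 ≤ j → j ≤ n → 0 < s j := by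
    intro j h1 h2
    apply Real.sin_pos_of_pos_of_lt_pi
    · have : (1:ℝ) ≤ (j:ℝ) := by exact_mod_cast h1
      nlinarith
    · have hj : (j:ℝ) ≤ n := by exact_mod_cast h2
      have : (j:ℝ)*θ < ((n:ℝ)+1)*θ := by nlinarith
      calc (j:ℝ)*θ < ((n:ℝ)+1)*θ := this
        _ = π := by rw [hθ]; field_simp
  have hs0 : s 0 = 0 := by simp [hs]
  have hsn1 : s (n+1) = 0 := by
    have : ((n:ℝ)+1)*θ = π := by rw [hθ]; field_simp
    simp only [hs]
    push_cast
    rw [this]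
    exact Real.sin_pi
  have hrec : ∀ j : ℕ, s (j+2) + s j = 2 * cos θ * s (j+1) := by
    intro j
    have := sin_rec θ j
    simpa [hs, push_cast] using by push_cast; exact this
  -- pointwise AM-GM bound
  have hstep : ∀ j ∈ range (n-1),
      2 * x j * x (j+1) ≤ s (j+2)/s (j+1) * x j ^ 2 + s (j+1)/s (j+2) * x (j+1) ^ 2 := by
    intro j hj
    have hjlt : j < n - 1 := mem_range.mp hj
    have h1 : 0 < s (j+1) := hspos _ (by omega) (by omega)
    have h2 : 0 < s (j+2) := hspos _ (by omega) (by omega)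
    have key : 0 ≤ (Real.sqrt (s (j+2)/s (j+1)) * x j - Real.sqrt (s (j+1)/s (j+2)) * x (j+1))^2 := sq_nonneg _
    have e1 : Real.sqrt (s (j+2)/s (j+1)) ^2 = s (j+2)/s (j+1) := Real.sq_sqrt (by positivity)
    have e2 : Real.sqrt (s (j+1)/s (j+2)) ^2 = s (j+1)/s (j+2) := Real.sq_sqrt (by positivity)
    have e3 : Real.sqrt (s (j+2)/s (j+1)) * Real.sqrt (s (j+1)/s (j+2)) = 1 := by
      rw [← Real.sqrt_mul (by positivity)]
      rw [show s (j+2)/s (j+1) * (s (j+1)/s (j+2)) = 1 by field_simp]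
      exact Real.sqrt_one
    have expand : (Real.sqrt (s (j+2)/s (j+1)) * x j - Real.sqrt (s (j+1)/s (j+2)) * x (j+1))^2
        = s (j+2)/s (j+1) * x j ^ 2 + s (j+1)/s (j+2) * x (j+1) ^ 2 - 2 * (x j * x (j+1)) := by
      rw [sub_sq, mul_pow, mul_pow, e1, e2,
        show 2*(Real.sqrt (s (j+2)/s (j+1)) * x j)*(Real.sqrt (s (j+1)/s (j+2)) * x (j+1))
          = 2*(Real.sqrt (s (j+2)/s (j+1)) * Real.sqrt (s (j+1)/s (j+2)))*(x j * x (j+1)) by ring, e3]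
      ring
    rw [expand] at key
    linarith
  calc ∑ j ∈ range (n-1), 2 * x j * x (j+1)
      ≤ ∑ j ∈ range (n-1), (s (j+2)/s (j+1) * x j ^ 2 + s (j+1)/s (j+2) * x (j+1) ^ 2) :=
        Finset.sum_le_sum hstep
    _ = ∑ j ∈ range (n-1), s (j+2)/s (j+1) * x j ^ 2
        + ∑ j ∈ range (n-1), s (j+1)/s (j+2) * x (j+1) ^ 2 := Finset.sum_add_distrib
    _ = ∑ k ∈ range n, s (k+2)/s (k+1) * x k ^ 2
        + ∑ k ∈ range n, s k/s (k+1) * x k ^ 2 := by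
        congr 1
        · rw [show n = (n-1)+1 by omega, Finset.sum_range_succ]
          rw [show (n-1)+1 = n by omega, show (n-1)+2 = n+1 by omega, hsn1]
          simp
        · rw [show n = (n-1)+1 by omega, Finset.sum_range_succ']
          simp [hs0]
    _ = ∑ k ∈ range n, 2 * cos θ * x k ^ 2 := by
        rw [← Finset.sum_add_distrib]
        apply Finset.sum_congr rfl
        intro k hk
        have hk' : k < n := mem_range.mp hk
        have h1 : 0 < s (k+1) := hspos _ (by omega) (by omega)
        have : s (k+2)/s (k+1) + s k/s (k+1) = 2 * cos θ := by
          rw [← add_div, hrec k, mul_div_assoc, div_self h1.ne', mul_one]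
        nlinarith [this, sq_nonneg (x k)]
    _ = 2 * cos θ * ∑ k ∈ range n, x k ^ 2 := by rw [Finset.mul_sum]

lemma cos_sq_sum_eq {n : ℕ} (hn : 1 ≤ n) :
    ∑ k ∈ range (n+1), cos (((k:ℝ)+1) * (π/((n:ℝ)+1))) ^ 2
      = ∑ k ∈ range n, sin (((k:ℝ)+1) * (π/((n:ℝ)+1))) ^ 2 := by
  set θ := π/((n:ℝ)+1) with hθ
  have hn1 : (0:ℝ) < (n:ℝ)+1 := by positivity
  have hθpos : 0 < θ := by positivity
  have hσ : 0 < sin θ := by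
    apply Real.sin_pos_of_pos_of_lt_pi hθpos
    rw [hθ, div_lt_iff₀ hn1]
    nlinarith [Real.pi_pos, (show (1:ℝ) ≤ n by exact_mod_cast hn)]
  -- ∑ cos(2(k+1)θ) = 0 over k ∈ range (n+1)
  have htel : ∑ k ∈ range (n+1), cos ((2*(k:ℝ)+2)*θ) * (2 * sin θ)
      = sin ((2*(↑(n+1):ℝ))+1*θ) - sin θ → True := fun _ => trivial
  clear htel
  have f : ℕ → ℝ := fun k => sin ((2*(k:ℝ)+1)*θ)
  have htel : ∑ k ∈ range (n+1), cos ((2*(k:ℝ)+2)*θ) * (2 * sin θ) = 0 := by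
    have hsum := Finset.sum_range_sub (fun k : ℕ => sin ((2*(k:ℝ)+1)*θ)) (n+1)
    have : ∑ k ∈ range (n+1), cos ((2*(k:ℝ)+2)*θ) * (2 * sin θ)
        = ∑ k ∈ range (n+1), (sin ((2*(↑(k+1):ℝ))+1*θ)*1 - sin ((2*(k:ℝ)+1)*θ)) → True := fun _ => trivial
    clear this
    calc ∑ k ∈ range (n+1), cos ((2*(k:ℝ)+2)*θ) * (2 * sin θ)
        = ∑ k ∈ range (n+1), (sin ((2*(↑(k+1):ℝ)+1)*θ) - sin ((2*(k:ℝ)+1)*θ)) := by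
          apply Finset.sum_congr rfl
          intro k _
          rw [cos_tel θ k]
          push_cast
          ring_nf
      _ = sin ((2*(↑(n+1):ℝ)+1)*θ) - sin ((2*(0:ℕ):ℝ)+1*θ) := by
          rw [hsum]; norm_num
      _ = 0 := by
          have h1 : (2*(↑(n+1):ℝ)+1)*θ = θ + 2*π := by
            have h' : ((n:ℝ)+1)*θ = π := by rw [hθ]; field_simp
            push_cast; linear_combination 2 * h'
          rw [h1, Real.sin_add_two_pi]
          norm_num
  -- now the main computation
  have key : ∀ k : ℕ, cos (((k:ℝ)+1)*θ)^2 - sin (((k:ℝ)+1)*θ)^2 = cos ((2*(k:ℝ)+2)*θ) := by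
    intro k
    rw [show (2*(k:ℝ)+2)*θ = 2*((((k:ℝ))+1)*θ) by ring, Real.cos_two_mul]
    have := Real.sin_sq_add_cos_sq (((k:ℝ)+1)*θ)
    nlinarith [this]
  have hzero : ∑ k ∈ range (n+1), (cos (((k:ℝ)+1)*θ)^2 - sin (((k:ℝ)+1)*θ)^2) = 0 := by
    have h2σ : (2 * sin θ) ≠ 0 := by positivity
    have := htel
    rw [← Finset.sum_mul] at this
    have h0 : ∑ k ∈ range (n+1), cos ((2*(k:ℝ)+2)*θ) = 0 := by
      rcases mul_eq_zero.mp this with h | h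
      · exact h
      · exact absurd h h2σ
    rw [← h0]
    exact Finset.sum_congr rfl fun k _ => key k
  have hsinlast : sin (((↑n:ℝ)+1)*θ) = 0 := by
    rw [show ((n:ℝ)+1)*θ = π by rw [hθ]; field_simp]
    exact Real.sin_pi
  have hsplit : ∑ k ∈ range (n+1), sin (((k:ℝ)+1)*θ)^2 = ∑ k ∈ range n, sin (((k:ℝ)+1)*θ)^2 := by
    rw [Finset.sum_range_succ, hsinlast]
    norm_num
  have := Finset.sum_sub_distrib (f := fun k : ℕ => cos (((k:ℝ)+1)*θ)^2)
    (g := fun k : ℕ => sin (((k:ℝ)+1)*θ)^2) (s := range (n+1))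
  rw [this] at hzero
  linarith [hzero, hsplit.le, hsplit.ge]

noncomputable def Bmat (n : ℕ) (ρ : ℝ) (s : ℂ) : Matrix (Fin n) (Fin n ⊕ Fin 1) ℂ :=
  Matrix.fromCols (rhoJordan n ρ - s • (1 : Matrix (Fin n) (Fin n) ℂ))
    (Matrix.of fun i (_ : Fin 1) => if (i : ℕ) = n - 1 then (ρ : ℂ) else 0)

noncomputable def wv {n : ℕ} (v : EuclideanSpace ℂ (Fin n)) : ℕ → ℂ :=
  fun j => if h : j < n then v ⟨j, h⟩ else 0

lemma entry_inl {n : ℕ} (ρ : ℝ) (s : ℂ) (v : EuclideanSpace ℂ (Fin n)) (j : Fin n) :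
    (Matrix.toEuclideanLin (Bmat n ρ s)ᴴ v) (Sum.inl j)
      = (starRingEnd ℂ) ((ρ:ℂ) - s) * wv v j
        + (ρ:ℂ) * (if (j:ℕ) = 0 then 0 else wv v ((j:ℕ) - 1)) := by
  have h1 : (Matrix.toEuclideanLin (Bmat n ρ s)ᴴ v) (Sum.inl j)
      = ∑ i : Fin n, (starRingEnd ℂ) ((Bmat n ρ s) i (Sum.inl j)) * v i := by
    simp [Matrix.toEuclideanLin_apply, Matrix.mulVec, dotProduct,
      Matrix.conjTranspose_apply]
  rw [h1]
  have hsplit : ∀ i : Fin n, (starRingEnd ℂ) ((Bmat n ρ s) i (Sum.inl j)) * v i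
      = (if i = j then (starRingEnd ℂ) ((ρ:ℂ) - s) * v i else 0)
        + (if (j:ℕ) = (i:ℕ) + 1 then (ρ:ℂ) * v i else 0) := by
    intro i
    simp only [Bmat, Matrix.fromCols_apply_inl, Matrix.sub_apply, Matrix.smul_apply,
      Matrix.one_apply, rhoJordan, Matrix.of_apply]
    by_cases hij : i = j
    · subst hij
      have : ¬ ((i:ℕ) = (i:ℕ) + 1) := by omega
      simp [this]
    · have hne : (i:ℕ) ≠ (j:ℕ) := fun h => hij (Fin.ext h)
      by_cases hj1 : (j:ℕ) = (i:ℕ) + 1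
      · simp [hne, hj1, hij]
      · simp [hne, hj1, hij]
  rw [Finset.sum_congr rfl (fun i _ => hsplit i), Finset.sum_add_distrib]
  congr 1
  · rw [Finset.sum_ite_eq' Finset.univ j (fun i => (starRingEnd ℂ) ((ρ:ℂ) - s) * v i)]
    simp [wv, j.isLt]
  · rcases Nat.eq_zero_or_pos (j:ℕ) with h0 | hpos
    · rw [h0]
      refine Eq.trans (Finset.sum_eq_zero ?_) (by norm_num)
      intro i _
      have : ¬ ((0:ℕ) = (i:ℕ) + 1) := by omega
      simp [this]
    · have h0 : (j:ℕ) ≠ 0 := by omega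
      rw [if_neg h0]
      have hlt : (j:ℕ) - 1 < n := by omega
      rw [Finset.sum_eq_single_of_mem (⟨(j:ℕ)-1, hlt⟩ : Fin n) (Finset.mem_univ _)]
      · have hc : (j:ℕ) = ((⟨(j:ℕ)-1, hlt⟩ : Fin n) : ℕ) + 1 := by simp; omega
        rw [if_pos hc]
        simp [wv, hlt]
      · intro i _ hne
        apply if_neg
        intro hc
        apply hne
        apply Fin.ext
        simp
        omega

lemma entry_inr {n : ℕ} (hn : 1 ≤ n) (ρ : ℝ) (s : ℂ) (v : EuclideanSpace ℂ (Fin n)) (j : Fin 1) :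
    (Matrix.toEuclideanLin (Bmat n ρ s)ᴴ v) (Sum.inr j)
      = (ρ:ℂ) * wv v (n - 1) := by
  have h1 : (Matrix.toEuclideanLin (Bmat n ρ s)ᴴ v) (Sum.inr j)
      = ∑ i : Fin n, (starRingEnd ℂ) ((Bmat n ρ s) i (Sum.inr j)) * v i := by
    simp [Matrix.toEuclideanLin_apply, Matrix.mulVec, dotProduct,
      Matrix.conjTranspose_apply]
  rw [h1]
  have hlt : n - 1 < n := by omega
  rw [Finset.sum_eq_single_of_mem (⟨n-1, hlt⟩ : Fin n) (Finset.mem_univ _)]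
  · simp [Bmat, rhoJordan, wv, hlt]
  · intro i _ hne
    have : (i:ℕ) ≠ n - 1 := by
      intro hc; apply hne; apply Fin.ext; simp [hc]
    simp [Bmat, this]

lemma norm_formula {n : ℕ} (hn : 1 ≤ n) (ρ : ℝ) (s : ℂ) (v : EuclideanSpace ℂ (Fin n)) :
    ‖Matrix.toEuclideanLin (Bmat n ρ s)ᴴ v‖ ^ 2
      = ‖(starRingEnd ℂ) ((ρ:ℂ) - s) * wv v 0‖ ^ 2
        + ∑ j ∈ range n, ‖(starRingEnd ℂ) ((ρ:ℂ) - s) * wv v (j+1) + (ρ:ℂ) * wv v j‖ ^ 2 := by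
  obtain ⟨m, rfl⟩ : ∃ m, n = m + 1 := ⟨n - 1, by omega⟩
  have hnorm : ‖Matrix.toEuclideanLin (Bmat (m+1) ρ s)ᴴ v‖ ^ 2
      = ∑ i : Fin (m+1) ⊕ Fin 1, ‖(Matrix.toEuclideanLin (Bmat (m+1) ρ s)ᴴ v) i‖ ^ 2 := by
    rw [EuclideanSpace.norm_eq]
    rw [Real.sq_sqrt (by positivity)]
  rw [hnorm, Fintype.sum_sum_type, Fin.sum_univ_one, entry_inr hn,
    Finset.sum_congr rfl (fun (j : Fin (m+1)) _ => by rw [entry_inl ρ s v j]),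
    Fin.sum_univ_eq_sum_range (fun k => ‖(starRingEnd ℂ) ((ρ:ℂ) - s) * wv v k
          + (ρ:ℂ) * (if k = 0 then 0 else wv v (k-1))‖^2)]
  have hwn : wv v (m+1) = 0 := by simp [wv]
  rw [Finset.sum_range_succ' _ m,
    Finset.sum_range_succ (fun j => ‖(starRingEnd ℂ) ((ρ:ℂ) - s) * wv v (j+1) + (ρ:ℂ) * wv v j‖^2) m]
  simp only [Nat.succ_ne_zero, if_false, Nat.add_sub_cancel, if_pos rfl, mul_zero, add_zero,
    Nat.add_sub_cancel, hwn, zero_add]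
  simp only [if_true, mul_zero, add_zero]
  ring

lemma sin_theta_pos {n : ℕ} (hn : 1 ≤ n) : 0 < Real.sin (π/((n:ℝ)+1)) := by
  have hn1 : (0:ℝ) < (n:ℝ)+1 := by positivity
  apply Real.sin_pos_of_pos_of_lt_pi (by positivity)
  rw [div_lt_iff₀ hn1]
  nlinarith [Real.pi_pos, (show (1:ℝ) ≤ n by exact_mod_cast hn)]

lemma norm_v_sq {n : ℕ} (v : EuclideanSpace ℂ (Fin n)) :
    ‖v‖^2 = ∑ j ∈ range n, ‖wv v j‖^2 := by
  rw [EuclideanSpace.norm_eq, Real.sq_sqrt (by positivity)]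
  rw [← Fin.sum_univ_eq_sum_range (fun k => ‖wv v k‖^2) n]
  apply Finset.sum_congr rfl
  intro i _
  simp [wv, i.isLt]

lemma lower_bound {n : ℕ} (hn : 1 ≤ n) (ρ : ℝ) (hρ0 : 0 < ρ) (s : ℂ)
    (v : EuclideanSpace ℂ (Fin n)) (hv : ‖v‖ = 1) :
    ρ * Real.sin (π/((n:ℝ)+1)) ≤ ‖Matrix.toEuclideanLin (Bmat n ρ s)ᴴ v‖ := by
  set θ := π/((n:ℝ)+1) with hθ
  set c := Real.cos θ with hc
  set σ := Real.sin θ with hσdef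
  have hσ : 0 < σ := sin_theta_pos hn
  set γ := (starRingEnd ℂ) ((ρ:ℂ) - s) with hγ
  set r := ‖(ρ:ℂ) - s‖ with hr
  have hrγ : ‖γ‖ = r := by rw [hγ, hr, RCLike.norm_conj]
  set x : ℕ → ℝ := fun j => ‖wv v j‖ with hx
  have hx0 : ∀ j, 0 ≤ x j := fun j => norm_nonneg _
  have hxn : x n = 0 := by simp [hx, wv]
  have hS : ∑ j ∈ range n, x j ^ 2 = 1 := by
    have := norm_v_sq v
    rw [hv] at this
    simpa [hx] using this.symm
  have hnρ : ‖(ρ:ℂ)‖ = ρ := by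
    rw [Complex.norm_real, Real.norm_eq_abs, abs_of_pos hρ0]
  -- term bounds
  have hterm : ∀ j ∈ range n, (r * x (j+1) - ρ * x j)^2
      ≤ ‖γ * wv v (j+1) + (ρ:ℂ) * wv v j‖^2 := by
    intro j _
    set a := γ * wv v (j+1)
    set b := (ρ:ℂ) * wv v j
    have hna : ‖a‖ = r * x (j+1) := by rw [norm_mul, hrγ]
    have hnb : ‖b‖ = ρ * x j := by rw [norm_mul, hnρ]
    have h1 : ‖a‖ ≤ ‖a + b‖ + ‖b‖ := by
      have := norm_add_le (a + b) (-b); simpa using this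
    have h2 : ‖b‖ ≤ ‖a + b‖ + ‖a‖ := by
      have := norm_add_le (-a) (a + b); simpa [add_comm] using this
    have := sq_le_sq' (by linarith : -(‖a + b‖) ≤ ‖a‖ - ‖b‖) (by linarith)
    rw [hna, hnb] at this
    exact this
  have hfirst : (r * x 0)^2 = ‖γ * wv v 0‖^2 := by
    rw [norm_mul, hrγ]
  -- sum manipulations
  have hshift : ∑ j ∈ range n, x (j+1) ^ 2 = (∑ j ∈ range n, x j ^ 2) - x 0 ^ 2 := by
    have h1 := Finset.sum_range_succ' (fun j => x j ^ 2) n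
    have h2 := Finset.sum_range_succ (fun j => x j ^ 2) n
    rw [hxn] at h2
    simp at h2
    rw [h2] at h1
    linarith
  have hcross : ∑ j ∈ range n, x (j+1) * x j ≤ c := by
    have h2 := Finset.sum_range_succ (fun j => x (j+1) * x j) (n-1)
    rw [show (n-1)+1 = n by omega] at h2
    have hw := wirtinger hn x hx0
    rw [hS] at hw
    have heq : ∑ j ∈ range (n-1), x (j+1) * x j = ∑ j ∈ range (n-1), x j * x (j+1) := by
      apply Finset.sum_congr rfl; intro j _; ring
    calc ∑ j ∈ range n, x (j+1) * x j
        = ∑ j ∈ range (n-1), x (j+1) * x j + x n * x (n-1) := h2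
      _ = ∑ j ∈ range (n-1), x j * x (j+1) := by rw [hxn, heq]; ring
      _ ≤ c := by
          have : ∑ j ∈ range (n-1), 2 * x j * x (j+1) = 2 * ∑ j ∈ range (n-1), x j * x (j+1) := by
            rw [Finset.mul_sum]; apply Finset.sum_congr rfl; intro j _; ring
          rw [this] at hw
          linarith
  -- combine
  have hN : (ρ * σ)^2 ≤ ‖Matrix.toEuclideanLin (Bmat n ρ s)ᴴ v‖^2 := by
    rw [norm_formula hn ρ s v, ← hγ]
    have hsum : ∑ j ∈ range n, (r * x (j+1) - ρ * x j)^2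
        ≤ ∑ j ∈ range n, ‖γ * wv v (j+1) + (ρ:ℂ) * wv v j‖^2 := Finset.sum_le_sum hterm
    have hexp : ∑ j ∈ range n, (r * x (j+1) - ρ * x j)^2
        = r^2 * ∑ j ∈ range n, x (j+1)^2 + ρ^2 * ∑ j ∈ range n, x j ^2
          - 2*r*ρ * ∑ j ∈ range n, x (j+1) * x j := by
      have hpt : ∀ j ∈ range n, (r * x (j+1) - ρ * x j)^2
          = r^2*x (j+1)^2 + ρ^2*x j^2 - 2*r*ρ*(x (j+1)*x j) := fun j _ => by ring
      rw [Finset.sum_congr rfl hpt, Finset.sum_sub_distrib, Finset.sum_add_distrib,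
        ← Finset.mul_sum, ← Finset.mul_sum, ← Finset.mul_sum]
    have hrpos : 0 ≤ r := norm_nonneg _
    have hpyth := Real.sin_sq_add_cos_sq θ
    have hcs : ∑ j ∈ range n, x (j+1) * x j ≤ c := hcross
    nlinarith [hsum, hexp, hshift, hS, sq_nonneg (r - ρ*c), sq_nonneg (x 0),
      mul_nonneg (mul_nonneg hrpos hρ0.le) (sub_nonneg.mpr hcs), hfirst,
      mul_le_mul_of_nonneg_left hcs (by positivity : (0:ℝ) ≤ 2*r*ρ)]
  have hnn : 0 ≤ ‖Matrix.toEuclideanLin (Bmat n ρ s)ᴴ v‖ := norm_nonneg _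
  nlinarith [hN, hnn, mul_pos hρ0 hσ]


lemma cs_id (θ : ℝ) (k : ℕ) :
    Real.cos θ * Real.sin (((k:ℝ)+2)*θ) - Real.sin (((k:ℝ)+1)*θ)
      = Real.sin θ * Real.cos (((k:ℝ)+2)*θ) := by
  rw [show ((k:ℝ)+2)*θ = ((k:ℝ)+1)*θ + θ by ring, Real.sin_add, Real.cos_add]
  linear_combination Real.sin (((k:ℝ)+1)*θ) * (Real.sin_sq_add_cos_sq θ)

lemma neg_pow_sq (k : ℕ) (t : ℝ) : ((-1:ℝ)^k * t)^2 = t^2 := by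
  rcases Nat.even_or_odd k with h | h
  · rw [h.neg_one_pow]; ring
  · rw [h.neg_one_pow]; ring

lemma upper_exists {n : ℕ} (hn : 1 ≤ n) (ρ : ℝ) (hρ0 : 0 < ρ) :
    ∃ v : EuclideanSpace ℂ (Fin n), ‖v‖ = 1 ∧
      ρ * Real.sin (π/((n:ℝ)+1))
        = ‖Matrix.toEuclideanLin
            (Bmat n ρ (((ρ*(1 - Real.cos (π/((n:ℝ)+1))) : ℝ) : ℂ)))ᴴ v‖ := by
  set θ := π/((n:ℝ)+1) with hθ
  set c := Real.cos θ with hc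
  set σ := Real.sin θ with hσdef
  have hσ : 0 < σ := sin_theta_pos hn
  set s₀ : ℂ := ((ρ*(1-c) : ℝ) : ℂ) with hs₀
  set u : ℕ → ℂ := fun j => (((-1:ℝ)^j * Real.sin (((j:ℝ)+1)*θ) : ℝ) : ℂ) with hu
  set v₀ : EuclideanSpace ℂ (Fin n) := WithLp.toLp 2 (fun i => u (i:ℕ)) with hv₀
  have hnπ : ((n:ℝ)+1)*θ = π := by
    rw [hθ]; field_simp
  have hγconj : (starRingEnd ℂ) ((ρ:ℂ) - s₀) = ((ρ*c:ℝ):ℂ) := by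
    rw [hs₀, show (ρ:ℂ) - ((ρ*(1-c):ℝ):ℂ) = ((ρ*c : ℝ):ℂ) by push_cast; ring,
      Complex.conj_ofReal]
  have hwv : ∀ j, j ≤ n → wv v₀ j = u j := by
    intro j hj
    by_cases h : j < n
    · simp [wv, h, hv₀]
    · have hjn : j = n := by omega
      subst hjn
      have hsin : Real.sin (((j:ℝ)+1)*θ) = 0 := by rw [hnπ]; exact Real.sin_pi
      have h1 : wv v₀ j = 0 := by simp [wv]
      have h2 : u j = 0 := by
        show ((((-1:ℝ))^j * Real.sin (((j:ℝ)+1)*θ) : ℝ):ℂ) = 0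
        rw [hsin, mul_zero, Complex.ofReal_zero]
      rw [h1, h2]
  have hnormsq : ∀ t : ℝ, ‖((t:ℝ):ℂ)‖^2 = t^2 := fun t => by
    rw [Complex.norm_real, Real.norm_eq_abs, sq_abs]
  have hfirst : ‖((ρ*c:ℝ):ℂ) * wv v₀ 0‖^2 = (ρ*σ)^2 * Real.cos (((0:ℝ)+1)*θ)^2 := by
    rw [hwv 0 (by omega)]
    have h1 : ((ρ*c:ℝ):ℂ) * u 0 = ((ρ*c*Real.sin θ :ℝ):ℂ) := by
      rw [hu]; push_cast; norm_num
    rw [h1, hnormsq, show ((0:ℝ)+1)*θ = θ by ring, hσdef, hc]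
    ring
  have hterm : ∀ j ∈ Finset.range n,
      ‖((ρ*c:ℝ):ℂ) * wv v₀ (j+1) + (ρ:ℂ) * wv v₀ j‖^2
        = (ρ*σ)^2 * Real.cos (((↑(j+1):ℝ)+1)*θ)^2 := by
    intro j hj
    have hjn := Finset.mem_range.mp hj
    rw [hwv (j+1) (by omega), hwv j (by omega)]
    have hval : ((ρ*c:ℝ):ℂ) * u (j+1) + (ρ:ℂ) * u j
        = ((((-1:ℝ))^(j+1) * (ρ * (c * Real.sin (((j:ℝ)+2)*θ) - Real.sin (((j:ℝ)+1)*θ))) : ℝ) : ℂ) := by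
      rw [hu]; push_cast; ring
    rw [hval, hnormsq, neg_pow_sq, hc, hσdef, cs_id θ j,
      show ((↑(j+1):ℝ)+1)*θ = ((j:ℝ)+2)*θ by push_cast; ring]
    ring
  have hBv : ‖Matrix.toEuclideanLin (Bmat n ρ s₀)ᴴ v₀‖^2
      = (ρ*σ)^2 * ∑ k ∈ range (n+1), Real.cos (((k:ℝ)+1)*θ)^2 := by
    rw [norm_formula hn ρ s₀ v₀, hγconj, Finset.sum_congr rfl hterm, hfirst,
      Finset.mul_sum,
      Finset.sum_range_succ' (fun k => (ρ*σ)^2 * Real.cos (((k:ℝ)+1)*θ)^2) n]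
    push_cast
    ring
  have hv₀sq : ‖v₀‖^2 = ∑ k ∈ range n, Real.sin (((k:ℝ)+1)*θ)^2 := by
    rw [norm_v_sq v₀]
    apply Finset.sum_congr rfl
    intro k hk
    rw [hwv k (le_of_lt (Finset.mem_range.mp hk)), hu, hnormsq, neg_pow_sq]
  have hkey : ‖Matrix.toEuclideanLin (Bmat n ρ s₀)ᴴ v₀‖^2 = (ρ*σ)^2 * ‖v₀‖^2 := by
    rw [hBv, hv₀sq, hθ, cos_sq_sum_eq hn]
  have hsqpos : 0 < ‖v₀‖^2 := by
    rw [hv₀sq]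
    apply Finset.sum_pos'
    · intro k _; positivity
    · refine ⟨0, Finset.mem_range.mpr (by omega), ?_⟩
      rw [show (((0:ℕ):ℝ)+1)*θ = θ by norm_num]
      exact pow_pos hσ 2
  have hpos : 0 < ‖v₀‖ := by nlinarith [norm_nonneg v₀, hsqpos]
  have hBnorm : ‖Matrix.toEuclideanLin (Bmat n ρ s₀)ᴴ v₀‖ = ρ*σ*‖v₀‖ := by
    have h1 : (0:ℝ) ≤ ρ*σ*‖v₀‖ := by positivity
    rw [← Real.sqrt_sq (norm_nonneg (Matrix.toEuclideanLin (Bmat n ρ s₀)ᴴ v₀)), hkey,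
      show (ρ*σ)^2 * ‖v₀‖^2 = (ρ*σ*‖v₀‖)^2 by ring, Real.sqrt_sq h1]
  refine ⟨((‖v₀‖⁻¹ : ℝ):ℂ) • v₀, ?_, ?_⟩
  · rw [norm_smul, Complex.norm_real, Real.norm_eq_abs, abs_of_pos (inv_pos.mpr hpos),
      inv_mul_cancel₀ hpos.ne']
  · rw [_root_.map_smul, norm_smul, Complex.norm_real, Real.norm_eq_abs,
      abs_of_pos (inv_pos.mpr hpos), hBnorm]
    field_simp


lemma sigmaMin_eq {n : ℕ} {m : Type*} [Fintype m] (B : Matrix (Fin n) m ℂ) :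
    sigmaMin B = sInf {x : ℝ | ∃ v : EuclideanSpace ℂ (Fin n), ‖v‖ = 1 ∧
      x = ‖Matrix.toEuclideanLin Bᴴ v‖} := rfl

theorem integrator_distance_to_uncontrollability {n : ℕ} (hn : 1 ≤ n) (ρ : ℝ)
    (hρ0 : 0 < ρ) (hρ1 : ρ < 1) :
    distUnc (rhoJordan n ρ)
      (Matrix.of fun i (_ : Fin 1) => if (i : ℕ) = n - 1 then (ρ : ℂ) else 0) =
      ρ * Real.sin (π / (n + 1)) := by
  have hgoal : distUnc (rhoJordan n ρ)
      (Matrix.of fun i (_ : Fin 1) => if (i : ℕ) = n - 1 then (ρ : ℂ) else 0)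
      = ⨅ s : ℂ, sigmaMin (Bmat n ρ s) := rfl
  rw [hgoal]
  set L := ρ * Real.sin (π / ((n:ℝ) + 1)) with hL
  have hlow : ∀ s : ℂ, L ≤ sigmaMin (Bmat n ρ s) := by
    intro s
    rw [sigmaMin_eq]
    apply le_csInf
    · exact ⟨_, EuclideanSpace.single (⟨0, by omega⟩ : Fin n) (1:ℂ),
        by simp [EuclideanSpace.norm_single], rfl⟩
    · rintro x ⟨v, hv, rfl⟩
      exact lower_bound hn ρ hρ0 s v hv
  apply le_antisymm
  · obtain ⟨v, hv1, hv2⟩ := upper_exists hn ρ hρ0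
    calc (⨅ s : ℂ, sigmaMin (Bmat n ρ s))
        ≤ sigmaMin (Bmat n ρ (((ρ*(1 - Real.cos (π/((n:ℝ)+1))) : ℝ) : ℂ))) := by
          apply ciInf_le
          refine ⟨L, ?_⟩
          rintro x ⟨s, rfl⟩
          exact hlow s
      _ ≤ L := by
          rw [sigmaMin_eq]
          apply csInf_le
          · refine ⟨L, ?_⟩
            rintro x ⟨w, hw, rfl⟩
            exact lower_bound hn ρ hρ0 _ w hw
          · exact ⟨v, hv1, hv2⟩
  · exact le_ciInf hlow
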